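/- arXiv:2508.17177 — 2 statements merged into one kernel-verified Lean document; each statement's English description precedes it below -/
import Mathlib

section
/- The rule picking rule AbC satisfies reversal symmetry: for every set F ⊆ F_S of positional scoring rules with rev(F) = F and every profile σ, rev(AbC(F,σ)) = AbC(F, rev(σ)). -/
open scoped Classical

noncomputable section

/-- A strict ranking of the alternatives `A` among `m` positions: each alternative is
assigned its (0-indexed) position. -/
abbrev Ranking (A : Type*) (m : ℕ) := A ≃ Fin m

/-- A weak ranking: a complete and transitive binary relation (ties allowed).
`ge a b` means `a` is ranked weakly above `b`. -/
structure WeakRanking (A : Type*) where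
  ge : A → A → Prop
  total : ∀ a b, ge a b ∨ ge b a
  trans : ∀ a b c, ge a b → ge b c → ge a c

namespace WeakRanking

variable {A : Type*}

/-- `a` is ranked strictly above `b`. -/
def strict (r : WeakRanking A) (a b : A) : Prop := r.ge a b ∧ ¬ r.ge b a

/-- `a` and `b` are tied. -/
def tied (r : WeakRanking A) (a b : A) : Prop := r.ge a b ∧ r.ge b a

/-- The reversed weak ranking. -/
def rev (r : WeakRanking A) : WeakRanking A where
  ge a b := r.ge b a
  total a b := r.total b a
  trans _ _ _ h1 h2 := r.trans _ _ _ h2 h1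

/-- The all-tied weak ranking. -/
def allTied (A : Type*) : WeakRanking A :=
  ⟨fun _ _ => True, fun _ _ => Or.inl trivial, fun _ _ _ _ _ => trivial⟩

end WeakRanking

variable {A : Type*} {m : ℕ}

/-- The weak ranking induced by a strict ranking (smaller position = ranked higher). -/
def Ranking.toWeak (r : Ranking A m) : WeakRanking A where
  ge a b := r a ≤ r b
  total a b := le_total _ _
  trans _ _ _ h1 h2 := le_trans h1 h2

/-- The position-reversal permutation. -/
def finRevPerm (m : ℕ) : Equiv.Perm (Fin m) :=
  ⟨Fin.rev, Fin.rev, Fin.rev_rev, Fin.rev_rev⟩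

/-- The reversed strict ranking. -/
def Ranking.revR (r : Ranking A m) : Ranking A m := r.trans (finRevPerm m)

/-- Kendall-Tau distance with ties between two weak rankings: the sum over unordered pairs
of distinct alternatives of `D + T/2`, realized as half the sum over ordered pairs. -/
def KT [Fintype A] (r1 r2 : WeakRanking A) : ℝ :=
  (∑ p ∈ Finset.univ.offDiag,
      ((if (r1.strict p.1 p.2 ∧ r2.strict p.2 p.1) ∨ (r1.strict p.2 p.1 ∧ r2.strict p.1 p.2)
          then (1 : ℝ) else 0)
        + (if r1.tied p.1 p.2 ∨ r2.tied p.1 p.2 then (1 : ℝ) else 0) / 2)) / 2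

/-- A profile: the list of the voters' strict rankings. -/
abbrev Profile (A : Type*) (m : ℕ) := List (Ranking A m)

/-- A social welfare function. -/
abbrev SWF (A : Type*) (m : ℕ) := Profile A m → WeakRanking A

/-- Reverse every voter's ranking. -/
def revProfile (σ : Profile A m) : Profile A m := σ.map Ranking.revR

/-- A monotone positional scoring vector `1 = s₁ ≥ s₂ ≥ … ≥ sₘ = 0`. -/
structure ScoreVec (m : ℕ) where
  s : Fin m → ℝ
  anti : Antitone s
  first : ∀ h : 0 < m, s ⟨0, h⟩ = 1
  last : ∀ h : 0 < m, s ⟨m - 1, Nat.sub_lt h Nat.one_pos⟩ = 0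

/-- Total score of alternative `a` in profile `σ`. -/
def totalScore (sv : ScoreVec m) (σ : Profile A m) (a : A) : ℝ :=
  (σ.map fun r => sv.s (r a)).sum

/-- The positional scoring rule associated to a scoring vector. -/
def posSWF (sv : ScoreVec m) : SWF A m := fun σ =>
  { ge := fun a b => totalScore sv σ b ≤ totalScore sv σ a
    total := fun _ _ => le_total _ _
    trans := fun _ _ _ h1 h2 => le_trans h2 h1 }

/-- The plurality scoring vector `(1,0,…,0)`. -/
def pluralityVec (m : ℕ) (hm : 2 ≤ m) : ScoreVec m where
  s i := if i.val = 0 then 1 else 0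
  anti := by
    intro i j hij
    have h' : i.val ≤ j.val := hij
    dsimp only
    by_cases hj : j.val = 0
    · have hi : i.val = 0 := by omega
      simp [hi, hj]
    · by_cases hi : i.val = 0 <;> simp [hi, hj]
  first h := by simp
  last h := by
    have h' : m - 1 ≠ 0 := by omega
    simp [h']

/-- The veto scoring vector `(1,…,1,0)`. -/
def vetoVec (m : ℕ) (hm : 2 ≤ m) : ScoreVec m where
  s i := if i.val = m - 1 then 0 else 1
  anti := by
    intro i j hij
    have h' : i.val ≤ j.val := hij
    dsimp only
    by_cases hi : i.val = m - 1
    · have hj : j.val = m - 1 := by have := j.isLt; omega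
      simp [hi, hj]
    · by_cases hj : j.val = m - 1 <;> simp [hi, hj]
  first h := by
    have h' : (0 : ℕ) ≠ m - 1 := by omega
    simp [h']
  last h := by simp

/-- The reverse scoring vector, `s'_j = 1 - s_{m+1-j}`. -/
def ScoreVec.revVec (sv : ScoreVec m) : ScoreVec m where
  s j := 1 - sv.s j.rev
  anti := by
    intro i j hij
    have h1 : j.rev ≤ i.rev := by
      simp only [Fin.le_def, Fin.val_rev]
      have h' : i.val ≤ j.val := hij
      omega
    have h2 := sv.anti h1
    dsimp only
    linarith
  first h := by
    have h1 : (⟨0, h⟩ : Fin m).rev = ⟨m - 1, Nat.sub_lt h Nat.one_pos⟩ := by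
      ext
      simp [Fin.val_rev]
    show 1 - sv.s _ = _
    rw [h1, sv.last h]
    ring
  last h := by
    have h1 : (⟨m - 1, Nat.sub_lt h Nat.one_pos⟩ : Fin m).rev = ⟨0, h⟩ := by
      ext
      simp only [Fin.val_rev]
      omega
    show 1 - sv.s _ = _
    rw [h1, sv.first h]
    ring

/-- One side of the split of the profile `σ` given by assignment `β`. -/
def subProfile (σ : Profile A m) (β : Fin σ.length → Bool) (b : Bool) : Profile A m :=
  ((List.finRange σ.length).filter fun i => β i == b).map σ.get

/-- Apply an SWF, producing the all-tied ranking on an empty (sub)profile. -/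
def applySplit (f : SWF A m) (σ : Profile A m) : WeakRanking A :=
  if σ = [] then WeakRanking.allTied A else f σ

/-- Expected Kendall-Tau disagreement of `f` between the two sides of a uniformly random
split of `σ` (each voter placed independently and uniformly on one of the two sides). -/
def expDisagree [Fintype A] (f : SWF A m) (σ : Profile A m) : ℝ :=
  (∑ β : Fin σ.length → Bool,
      KT (applySplit f (subProfile σ β true)) (applySplit f (subProfile σ β false)))
    / 2 ^ σ.length

/-- Aggregation by Consistency over a set of SWFs: the rules minimizing expected
disagreement across a random split. -/
def AbC [Fintype A] (F : Set (SWF A m)) (σ : Profile A m) : Set (SWF A m) :=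
  {f | f ∈ F ∧ ∀ g ∈ F, expDisagree f σ ≤ expDisagree g σ}

/-- Aggregation by Consistency over a set of positional scoring vectors. -/
def AbCVec [Fintype A] (F : Set (ScoreVec m)) (σ : Profile A m) : Set (ScoreVec m) :=
  {sv | sv ∈ F ∧ ∀ sv' ∈ F, expDisagree (posSWF sv) σ ≤ expDisagree (posSWF sv') σ}

/-- All permutations of the positions that fix every position outside `S`. -/
def permsOn (S : Finset (Fin m)) : List (Equiv.Perm (Fin m)) :=
  (Finset.univ.filter fun π : Equiv.Perm (Fin m) => ∀ i ∉ S, π i = i).toList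

/-- The `k`-shuffling of profile `σ` with respect to the set of positions `S`: each voter's
ranking is replaced by `k·m!` copies, split evenly among the `|S|!` permutations of `S`. -/
def shuffle (S : Finset (Fin m)) (k : ℕ) (σ : Profile A m) : Profile A m :=
  σ.flatMap fun r =>
    (permsOn S).flatMap fun π =>
      List.replicate (k * Nat.factorial m / Nat.factorial S.card) (r.trans π)

/-- The positions `2,…,m` (0-indexed: `1,…,m-1`). -/
def tailPositions (m : ℕ) : Finset (Fin m) := Finset.univ.filter fun i => 1 ≤ i.val

/-- Number of voters ranking `a` first. -/
def topCount (σ : Profile A m) (a : A) : ℕ := σ.countP fun r => (r a).val == 0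

/-- A weak ranking has no ties among distinct alternatives. -/
def NoTies (w : WeakRanking A) : Prop := ∀ a b : A, a ≠ b → ¬ w.tied a b

/-- Probability (over a uniformly random split of `σ`) that the outputs of `f` on the two
sides order `a` and `b` strictly oppositely. -/
def probD [Fintype A] (f : SWF A m) (σ : Profile A m) (a b : A) : ℝ :=
  ((Finset.univ.filter fun β : Fin σ.length → Bool =>
      ((applySplit f (subProfile σ β true)).strict a b ∧
        (applySplit f (subProfile σ β false)).strict b a) ∨
      ((applySplit f (subProfile σ β true)).strict b a ∧
        (applySplit f (subProfile σ β false)).strict a b)).card : ℝ) / 2 ^ σ.length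

/-- Probability (over a uniformly random split of `σ`) that `a` and `b` are tied in the
output of `f` on at least one side. -/
def probT [Fintype A] (f : SWF A m) (σ : Profile A m) (a b : A) : ℝ :=
  ((Finset.univ.filter fun β : Fin σ.length → Bool =>
      (applySplit f (subProfile σ β true)).tied a b ∨
      (applySplit f (subProfile σ β false)).tied a b).card : ℝ) / 2 ^ σ.length

/-- A rule picking rule over sets of positional scoring vectors. -/
abbrev RPRVec (A : Type*) (m : ℕ) := Set (ScoreVec m) → Profile A m → Set (ScoreVec m)

/-- An RPR returns a nonempty subset of the candidate rules. -/
def IsRPR (Z : RPRVec A m) : Prop := ∀ F σ, Z F σ ⊆ F ∧ (Z F σ).Nonempty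

/-- Anonymity of an RPR: invariance under permuting voters. -/
def AnonymousRPR (Z : RPRVec A m) : Prop :=
  ∀ (F : Set (ScoreVec m)) (σ σ' : Profile A m), σ.Perm σ' → Z F σ = Z F σ'

/-- Reversal symmetry of an RPR. -/
def ReversalSymmetric (Z : RPRVec A m) : Prop :=
  ∀ F : Set (ScoreVec m), ScoreVec.revVec '' F = F →
    ∀ σ : Profile A m, ScoreVec.revVec '' (Z F σ) = Z F (revProfile σ)

/-- Plurality-shuffling consistency of an RPR. -/
def PSConsistent (hm : 2 ≤ m) (Z : RPRVec A m) : Prop :=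
  ∀ F : Set (ScoreVec m), F.Finite → pluralityVec m hm ∈ F →
    ∀ σ : Profile A m, NoTies (posSWF (pluralityVec m hm) σ) →
      ∃ k : ℕ, 1 ≤ k ∧ ∀ k', k ≤ k' →
        Z F (shuffle (tailPositions m) k' σ) = {pluralityVec m hm}

/-- Union consistency of an RPR. -/
def UnionConsistent (Z : RPRVec A m) : Prop :=
  ∀ (F : Set (ScoreVec m)) (σa σb : Profile A m), (Z F σa ∩ Z F σb).Nonempty →
    Z F (σa ++ σb) = Z F σa ∩ Z F σb

/-- The welfare-maximizing RPR with utility function `u`. -/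
def welfareMax (u : Ranking A m → WeakRanking A → ℝ) : RPRVec A m := fun F σ =>
  {sv | sv ∈ F ∧ ∀ sv' ∈ F,
      (σ.map fun r => u r (posSWF sv' σ)).sum ≤ (σ.map fun r => u r (posSWF sv σ)).sum}

/-- The SWF induced by a (vector-valued) RPR, where it is singleton-valued. -/
def inducedVec (Z : RPRVec A m) (F : Set (ScoreVec m)) : SWF A m := fun σ =>
  if h : ∃ sv, Z F σ = {sv} then posSWF h.choose σ else WeakRanking.allTied A

/-- The SWF induced by an (SWF-valued) RPR, where it is singleton-valued. -/
def inducedSWF (Z : Set (SWF A m) → Profile A m → Set (SWF A m)) (F : Set (SWF A m)) :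
    SWF A m := fun σ =>
  if h : ∃ f, Z F σ = {f} then h.choose σ else WeakRanking.allTied A

/-- The SWF induced by AbC over scoring vectors. -/
def inducedAbCVec [Fintype A] (F : Set (ScoreVec m)) : SWF A m := fun σ =>
  if h : ∃ sv, AbCVec F σ = {sv} then posSWF h.choose σ else WeakRanking.allTied A

/-- Anonymity of an SWF. -/
def AnonymousSWF (f : SWF A m) : Prop :=
  ∀ σ σ' : Profile A m, σ.Perm σ' → f σ = f σ'

/-- Relabeling of a weak ranking along a permutation of the alternatives. -/
def permuteWeak (π : Equiv.Perm A) (w : WeakRanking A) : WeakRanking A where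
  ge a b := w.ge (π.symm a) (π.symm b)
  total a b := w.total _ _
  trans _ _ _ h1 h2 := w.trans _ _ _ h1 h2

/-- Neutrality of an SWF: permuting the alternatives permutes the output accordingly. -/
def NeutralSWF (f : SWF A m) : Prop :=
  ∀ (π : Equiv.Perm A) (σ : Profile A m),
    f (σ.map fun r => π.symm.trans r) = permuteWeak π (f σ)

/-- `a` pairwise defeats `b` in profile `σ`. -/
def pairwiseDefeats (σ : Profile A m) (a b : A) : Prop :=
  (σ.countP fun r => decide (r b < r a)) < (σ.countP fun r => decide (r a < r b))

/-- A set `S` is dominant if every member pairwise defeats every non-member. -/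
def DominantSet [Fintype A] (σ : Profile A m) (S : Finset A) : Prop :=
  ∀ a ∈ S, ∀ b ∉ S, pairwiseDefeats σ a b

/-- The Smith set: the smallest dominant set (the intersection of all dominant sets). -/
def SmithSet [Fintype A] (σ : Profile A m) : Finset A :=
  Finset.univ.filter fun a => ∀ S : Finset A, DominantSet σ S → a ∈ S

/-- `a` is among the top-ranked alternatives of `w`. -/
def isTop (w : WeakRanking A) (a : A) : Prop := ∀ b, w.ge a b

def SmithCriterion [Fintype A] (f : SWF A m) : Prop :=
  ∀ (σ : Profile A m) (a : A), isTop (f σ) a → a ∈ SmithSet σ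

def CondorcetConsistent [Fintype A] (f : SWF A m) : Prop :=
  ∀ (σ : Profile A m) (c : A), SmithSet σ = {c} →
    ∀ a, isTop (f σ) a → a ∈ SmithSet σ

def MajorityWinnerCriterion [Fintype A] (f : SWF A m) : Prop :=
  ∀ (σ : Profile A m) (c : A), SmithSet σ = {c} → σ.length < 2 * topCount σ c →
    ∀ a, isTop (f σ) a → a ∈ SmithSet σ

def PairwiseMajorityConsistent (f : SWF A m) : Prop :=
  ∀ (σ : Profile A m) (r : WeakRanking A),
    (∀ a b, r.strict a b ↔ pairwiseDefeats σ a b) → f σ = r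

def UnanimousSWF (f : SWF A m) : Prop :=
  ∀ (σ : Profile A m) (r : Ranking A m), σ ≠ [] → (∀ x ∈ σ, x = r) →
    f σ = Ranking.toWeak r

/-- Rank of `a` in weak ranking `w`: one plus the number of alternatives strictly above. -/
def rankIn [Fintype A] (w : WeakRanking A) (a : A) : ℕ :=
  1 + (Finset.univ.filter fun b => w.strict b a).card

/-- `r'` is obtained from `r` by (weakly) raising `a`, everything else unchanged. -/
def RaisesWeak (a : A) (r r' : Ranking A m) : Prop :=
  r' a ≤ r a ∧ ∀ b c : A, b ≠ a → c ≠ a → (r b < r c ↔ r' b < r' c)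

/-- Monotonicity of an SWF: raising an alternative never hurts its rank. -/
def MonotonicSWF [Fintype A] (f : SWF A m) : Prop :=
  ∀ (a : A) (σ σ' : Profile A m), List.Forall₂ (RaisesWeak a) σ σ' →
    rankIn (f σ') a ≤ rankIn (f σ) a

/-- Total score of `a` for a list of (position ↦ alternative) ballots of length `ℓ`. -/
def ballotScore [Fintype A] {ℓ : ℕ} (sv : ScoreVec ℓ) (P : List (Fin ℓ → A)) (a : A) : ℝ :=
  (P.map fun b => ∑ i : Fin ℓ, if b i = a then sv.s i else 0).sum

/-- A scoring vector achieves perfect consistency on the given split `(P1, P2)`. -/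
def PerfectConsistency [Fintype A] {ℓ : ℕ} (sv : ScoreVec ℓ)
    (P1 P2 : List (Fin ℓ → A)) : Prop :=
  ∀ a b : A, a ≠ b →
    0 < (ballotScore sv P1 a - ballotScore sv P1 b) *
        (ballotScore sv P2 a - ballotScore sv P2 b)

/-- Complete a `k`-partial ballot to a full ballot on `m` positions by placing the missing
alternatives at the bottom, in a fixed order. -/
def completeBallot [Fintype A] [LinearOrder A] {k m : ℕ} (hk : 0 < k)
    (b : Fin k → A) : Fin m → A := fun j =>
  if h : j.val < k then b ⟨j.val, h⟩
  else ((Finset.univ \ Finset.univ.image b).sort (· ≤ ·)).getD (j.val - k) (b ⟨0, hk⟩)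

/-- `k`-shuffling for (position ↦ alternative) ballots. -/
def shuffleBallots {m : ℕ} (S : Finset (Fin m)) (k : ℕ) (P : List (Fin m → A)) :
    List (Fin m → A) :=
  P.flatMap fun f =>
    (permsOn S).flatMap fun π =>
      List.replicate (k * Nat.factorial m / Nat.factorial S.card) (f ∘ π.symm)


/-! ### Auxiliary lemmas for reversal symmetry of AbC -/

lemma WeakRanking.ext' {A : Type*} {r1 r2 : WeakRanking A} (h : r1.ge = r2.ge) : r1 = r2 := by
  cases r1; cases r2; cases h; rfl

lemma ScoreVec.ext' {m : ℕ} {s1 s2 : ScoreVec m} (h : s1.s = s2.s) : s1 = s2 := by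
  cases s1; cases s2; cases h; rfl

lemma ScoreVec.revVec_revVec {m : ℕ} (sv : ScoreVec m) : sv.revVec.revVec = sv := by
  apply ScoreVec.ext'
  funext j
  simp [ScoreVec.revVec, Fin.rev_rev]

lemma totalScore_revVec {A : Type*} {m : ℕ} (sv : ScoreVec m) (τ : Profile A m) (a : A) :
    totalScore sv.revVec (revProfile τ) a = τ.length - totalScore sv τ a := by
  induction τ with
  | nil => simp [totalScore, revProfile]
  | cons r τ ih =>
    have hterm : sv.revVec.s ((Ranking.revR r) a) = 1 - sv.s (r a) := by
      simp [ScoreVec.revVec, Ranking.revR, finRevPerm, Fin.rev_rev]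
    simp only [totalScore, revProfile, List.map_cons, List.sum_cons, List.length_cons] at ih ⊢
    rw [hterm]
    have := ih
    push_cast
    push_cast at this
    linarith

lemma posSWF_revVec {A : Type*} {m : ℕ} (sv : ScoreVec m) (τ : Profile A m) :
    posSWF sv.revVec (revProfile τ) = (posSWF sv τ).rev := by
  apply WeakRanking.ext'
  funext a b
  apply propext
  show totalScore sv.revVec (revProfile τ) b ≤ totalScore sv.revVec (revProfile τ) a ↔
    totalScore sv τ a ≤ totalScore sv τ b
  rw [totalScore_revVec, totalScore_revVec]
  constructor <;> intro h <;> linarith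

lemma WeakRanking.rev_allTied {A : Type*} : (WeakRanking.allTied A).rev = WeakRanking.allTied A := by
  apply WeakRanking.ext'; rfl

lemma applySplit_revVec {A : Type*} {m : ℕ} (sv : ScoreVec m) (τ : Profile A m) :
    applySplit (posSWF sv.revVec) (revProfile τ) = (applySplit (posSWF sv) τ).rev := by
  unfold applySplit
  by_cases h : τ = []
  · subst h
    simp [revProfile, WeakRanking.rev_allTied]
  · have h' : revProfile τ ≠ [] := by simp [revProfile, h]
    rw [if_neg h', if_neg h, posSWF_revVec]

lemma KT_rev {A : Type*} [Fintype A] (r1 r2 : WeakRanking A) :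
    KT r1.rev r2.rev = KT r1 r2 := by
  unfold KT
  congr 1
  apply Finset.sum_congr rfl
  intro p _
  have hs : ∀ (r : WeakRanking A) a b, r.rev.strict a b ↔ r.strict b a := by
    intro r a b
    simp [WeakRanking.strict, WeakRanking.rev]
  have ht : ∀ (r : WeakRanking A) a b, r.rev.tied a b ↔ r.tied a b := by
    intro r a b
    simp only [WeakRanking.tied, WeakRanking.rev]
    tauto
  congr 1
  · have hcond : ((r1.rev.strict p.1 p.2 ∧ r2.rev.strict p.2 p.1) ∨
        (r1.rev.strict p.2 p.1 ∧ r2.rev.strict p.1 p.2)) =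
        ((r1.strict p.1 p.2 ∧ r2.strict p.2 p.1) ∨
        (r1.strict p.2 p.1 ∧ r2.strict p.1 p.2)) := by
      apply propext
      rw [hs, hs, hs, hs]
      tauto
    simp only [hcond]
  · have hcond : (r1.rev.tied p.1 p.2 ∨ r2.rev.tied p.1 p.2) =
        (r1.tied p.1 p.2 ∨ r2.tied p.1 p.2) := by
      apply propext
      rw [ht, ht]
    simp only [hcond]

lemma finRange_cast {n n' : ℕ} (h : n' = n) :
    List.finRange n' = (List.finRange n).map (Fin.cast h.symm) := by
  subst h
  simp [Fin.cast_refl]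

lemma length_revProfile {A : Type*} {m : ℕ} (σ : Profile A m) :
    (revProfile σ).length = σ.length := by simp [revProfile]

lemma subProfile_rev {A : Type*} {m : ℕ} (σ : Profile A m)
    (β : Fin (revProfile σ).length → Bool) (b : Bool) :
    subProfile (revProfile σ) β b
      = revProfile (subProfile σ (fun i => β (Fin.cast (length_revProfile σ).symm i)) b) := by
  unfold subProfile revProfile
  rw [show List.finRange (List.map (Ranking.revR (A := A) (m := m)) σ).length
      = (List.finRange σ.length).map (Fin.cast (length_revProfile σ).symm) from
      finRange_cast (length_revProfile σ)]
  erw [List.filter_map]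
  simp only [List.map_map, Function.comp]
  refine List.map_map.trans ?_
  apply List.map_congr_left
  intro i _
  simp [List.get_eq_getElem, List.getElem_map]
  show (List.map Ranking.revR σ)[i.val]'(by simp) = _
  simp

lemma expDisagree_revVec {A : Type*} [Fintype A] {m : ℕ} (sv : ScoreVec m) (σ : Profile A m) :
    expDisagree (posSWF sv.revVec) (revProfile σ) = expDisagree (posSWF sv) σ := by
  unfold expDisagree
  have h : (revProfile σ).length = σ.length := length_revProfile σ
  have hnum : (∑ β : Fin (revProfile σ).length → Bool,
      KT (applySplit (posSWF sv.revVec) (subProfile (revProfile σ) β true))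
        (applySplit (posSWF sv.revVec) (subProfile (revProfile σ) β false)))
      = ∑ β : Fin σ.length → Bool,
      KT (applySplit (posSWF sv) (subProfile σ β true))
        (applySplit (posSWF sv) (subProfile σ β false)) := by
    apply Fintype.sum_equiv
      ⟨fun β i => β (Fin.cast h.symm i), fun β i => β (Fin.cast h i),
        fun _ => rfl, fun _ => rfl⟩
    intro β
    rw [subProfile_rev σ β true, subProfile_rev σ β false,
      applySplit_revVec, applySplit_revVec, KT_rev]
    simp only [Equiv.coe_fn_mk]
  rw [hnum, h]

/-- AbC satisfies reversal symmetry: for every set `F ⊆ F_S` of positional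
scoring rules with `rev(F) = F` and every profile `σ`,
`rev(AbC(F,σ)) = AbC(F, rev(σ))`. -/
theorem abC_reversal_symmetric {A : Type*} [Fintype A] {m : ℕ} (hm : 2 ≤ m)
    (hcard : Fintype.card A = m) (F : Set (ScoreVec m))
    (hF : ScoreVec.revVec '' F = F) (σ : Profile A m) :
    ScoreVec.revVec '' (AbCVec F σ) = AbCVec F (revProfile σ) := by
  have hrevF : ∀ g ∈ F, ScoreVec.revVec g ∈ F := by
    intro g hg
    rw [← hF]
    exact ⟨g, hg, rfl⟩
  have key : ∀ sv : ScoreVec m,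
      expDisagree (posSWF sv.revVec) (revProfile σ) = expDisagree (posSWF sv) σ :=
    fun sv => expDisagree_revVec sv σ
  ext sv'
  constructor
  · rintro ⟨sv, ⟨hsvF, hmin⟩, rfl⟩
    refine ⟨hrevF sv hsvF, ?_⟩
    intro g hg
    rw [key sv]
    have h1 := hmin (ScoreVec.revVec g) (hrevF g hg)
    have h2 : expDisagree (posSWF g) (revProfile σ)
        = expDisagree (posSWF (ScoreVec.revVec g)) σ := by
      conv_lhs => rw [← ScoreVec.revVec_revVec g]
      exact key (ScoreVec.revVec g)
    rw [h2]
    exact h1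
  · rintro ⟨hsv'F, hmin⟩
    refine ⟨ScoreVec.revVec sv', ⟨hrevF sv' hsv'F, ?_⟩, ScoreVec.revVec_revVec sv'⟩
    intro g hg
    have h1 : expDisagree (posSWF (ScoreVec.revVec sv')) σ
        = expDisagree (posSWF sv') (revProfile σ) := by
      conv_rhs => rw [← ScoreVec.revVec_revVec sv']
      exact (key (ScoreVec.revVec sv')).symm
    rw [h1, ← key g]
    exact hmin (ScoreVec.revVec g) (hrevF g hg)

end
end

section
/- For every positional scoring rule f_s ∈ F_S, every profile σ over m ≥ 2 alternatives, and every k ∈ ℤ_+, f_s(Shuffle_{[2,m]}^k(σ)) = f_p(σ); in particular, all positional scoring rules produce the same output ranking on the shuffled profile Shuffle_{[2,m]}^k(σ). -/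
open scoped Classical

noncomputable section

variable {A : Type*} {m : ℕ}

-- Auxiliary lemmas for STATEMENT 3

private lemma wext {r1 r2 : WeakRanking A} (h : r1.ge = r2.ge) : r1 = r2 := by
  obtain ⟨g1, t1, tr1⟩ := r1
  obtain ⟨g2, t2, tr2⟩ := r2
  dsimp at h
  subst h
  rfl

private lemma sum_map_flatMap {α β : Type*} (l : List α) (g : α → List β) (f : β → ℝ) :
    ((l.flatMap g).map f).sum = (l.map fun x => ((g x).map f).sum).sum := by
  induction l with
  | nil => simp
  | cons x l ih => simp [List.flatMap_cons, ih]

private lemma sum_map_toList {α : Type*} (s : Finset α) (f : α → ℝ) :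
    (s.toList.map f).sum = ∑ x ∈ s, f x := by
  rw [Finset.sum, ← Multiset.sum_coe, ← Multiset.map_coe, Finset.coe_toList]

/-- The finset of permutations fixing position 0. -/
def PermsSet (m : ℕ) : Finset (Equiv.Perm (Fin m)) :=
  Finset.univ.filter fun π : Equiv.Perm (Fin m) => ∀ i ∉ tailPositions m, π i = i

lemma mem_PermsSet {π : Equiv.Perm (Fin m)} :
    π ∈ PermsSet m ↔ ∀ i : Fin m, i.val = 0 → π i = i := by
  simp only [PermsSet, Finset.mem_filter, Finset.mem_univ, true_and, tailPositions,
    Finset.mem_filter]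
  constructor
  · intro h i hi; exact h i (by simp [hi])
  · intro h i hi; exact h i (by omega)

/-- Sum of scores of position `p` over all permutations of the tail positions. -/
def Wsum (sv : ScoreVec m) (p : Fin m) : ℝ := ∑ π ∈ PermsSet m, sv.s (π p)

lemma score_shuffle (sv : ScoreVec m) (σ : Profile A m) (k : ℕ) (a : A) :
    totalScore sv (shuffle (tailPositions m) k σ) a
      = ((k * Nat.factorial m / Nat.factorial (tailPositions m).card : ℕ) : ℝ)
        * (σ.map fun r => Wsum sv (r a)).sum := by
  set c := k * Nat.factorial m / Nat.factorial (tailPositions m).card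
  rw [totalScore, shuffle, sum_map_flatMap]
  rw [List.map_congr_left (fun r _ => ?_), ← List.sum_map_mul_left]
  rw [permsOn, sum_map_flatMap, sum_map_toList]
  rw [Wsum, PermsSet, Finset.mul_sum]
  refine Finset.sum_congr rfl fun π _ => ?_
  simp [List.sum_replicate, Equiv.trans_apply, mul_comm]
  exact Or.inl rfl

lemma swap_mem_PermsSet {p q : Fin m} (hp : p.val ≠ 0) (hq : q.val ≠ 0)
    {π : Equiv.Perm (Fin m)} (hπ : π ∈ PermsSet m) :
    π * Equiv.swap p q ∈ PermsSet m := by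
  rw [mem_PermsSet] at hπ ⊢
  intro i hi
  have h1 : Equiv.swap p q i = i :=
    Equiv.swap_apply_of_ne_of_ne (fun h => hp (h ▸ hi)) (fun h => hq (h ▸ hi))
  simp only [Equiv.Perm.mul_apply, h1]
  exact hπ i hi

lemma Wsum_eq_of_ne (sv : ScoreVec m) {p q : Fin m} (hp : p.val ≠ 0)
    (hq : q.val ≠ 0) : Wsum sv p = Wsum sv q := by
  refine Finset.sum_equiv (Equiv.mulRight (Equiv.swap p q)) (fun π => ?_) (fun π hπ => ?_)
  · constructor
    · intro h; exact swap_mem_PermsSet hp hq h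
    · intro h
      have := swap_mem_PermsSet hp hq h
      simpa [mul_assoc] using this
  · simp [Equiv.Perm.mul_apply, Equiv.swap_apply_right]

lemma one_mem_PermsSet : (1 : Equiv.Perm (Fin m)) ∈ PermsSet m := by
  rw [mem_PermsSet]; intro i _; rfl

lemma Wsum_zero (hm : 2 ≤ m) (sv : ScoreVec m) {p : Fin m} (hp : p.val = 0) :
    Wsum sv p = (PermsSet m).card := by
  have hm0 : 0 < m := by omega
  have hpz : p = ⟨0, hm0⟩ := by ext; exact hp
  rw [Wsum, Finset.sum_congr rfl fun π hπ => ?_, Finset.sum_const, nsmul_eq_mul, mul_one]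
  rw [mem_PermsSet] at hπ
  rw [hπ p hp, hpz, sv.first hm0]

lemma s_le_one (hm : 2 ≤ m) (sv : ScoreVec m) (j : Fin m) : sv.s j ≤ 1 := by
  have hm0 : 0 < m := by omega
  have := sv.anti (show (⟨0, hm0⟩ : Fin m) ≤ j from by simp [Fin.le_def])
  rw [sv.first hm0] at this
  exact this

lemma Wsum_lt (hm : 2 ≤ m) (sv : ScoreVec m) {p : Fin m} (hp : p.val ≠ 0) :
    Wsum sv p < (PermsSet m).card := by
  have hm0 : 0 < m := by omega
  set q : Fin m := ⟨m - 1, Nat.sub_lt hm0 Nat.one_pos⟩ with hqdef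
  have hq : q.val ≠ 0 := by simp [hqdef]; omega
  have hswap : Equiv.swap p q ∈ PermsSet m := by
    have := swap_mem_PermsSet hp hq (one_mem_PermsSet (m := m))
    simpa using this
  have : Wsum sv p < ∑ _π ∈ PermsSet m, (1 : ℝ) := by
    refine Finset.sum_lt_sum (fun π _ => s_le_one hm sv _) ⟨Equiv.swap p q, hswap, ?_⟩
    rw [Equiv.swap_apply_left, sv.last hm0]
    norm_num
  simpa using this

lemma sum_Wsum (hm : 2 ≤ m) (sv : ScoreVec m) (σ : Profile A m) (a : A) :
    (σ.map fun r => Wsum sv (r a)).sum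
      = (((PermsSet m).card : ℝ) - Wsum sv ⟨1, by omega⟩) * (topCount σ a)
        + Wsum sv ⟨1, by omega⟩ * σ.length := by
  induction σ with
  | nil => simp [topCount]
  | cons r σ ih =>
    rw [List.map_cons, List.sum_cons, ih]
    simp only [topCount, List.countP_cons, List.length_cons]
    by_cases h : (r a).val = 0
    · rw [Wsum_zero hm sv h]
      simp only [h, beq_self_eq_true, if_pos]
      push_cast
      ring
    · rw [Wsum_eq_of_ne sv h (by norm_num : ((⟨1, by omega⟩ : Fin m)).val ≠ 0)]
      have h' : ((r a).val == 0) = false := by simpa using h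
      simp only [h', if_neg, Bool.false_eq_true, not_false_eq_true]
      push_cast
      ring

lemma plu_score (hm : 2 ≤ m) (σ : Profile A m) (a : A) :
    totalScore (pluralityVec m hm) σ a = (topCount σ a : ℝ) := by
  induction σ with
  | nil => simp [totalScore, topCount]
  | cons r σ ih =>
    rw [totalScore, List.map_cons, List.sum_cons]
    rw [totalScore] at ih
    simp only [topCount, List.countP_cons, List.length_cons] at *
    simp only [pluralityVec] at ih ⊢
    by_cases h : (r a).val = 0 <;> simp [h, ih] <;> push_cast <;> ring

/-- For every positional scoring rule `f_s`, every profile `σ` on `m ≥ 2`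
alternatives and every `k ∈ ℤ₊`, `f_s(Shuffle_{[2,m]}^k(σ)) = f_p(σ)`; in particular all
positional scoring rules produce the same output on the shuffled profile. -/
theorem shuffle_collapses_to_plurality {A : Type*} [Fintype A] {m : ℕ} (hm : 2 ≤ m)
    (hcard : Fintype.card A = m) (sv : ScoreVec m) (σ : Profile A m) (k : ℕ) (hk : 1 ≤ k) :
    posSWF sv (shuffle (tailPositions m) k σ) = posSWF (pluralityVec m hm) σ ∧
    ∀ sv' : ScoreVec m,
      posSWF sv (shuffle (tailPositions m) k σ)
        = posSWF sv' (shuffle (tailPositions m) k σ) := by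
  have key : ∀ sv : ScoreVec m,
      posSWF sv (shuffle (tailPositions m) k σ) = posSWF (pluralityVec m hm) σ := by
    intro sv
    set c := k * Nat.factorial m / Nat.factorial (tailPositions m).card with hc
    have hcpos : 0 < c := by
      have h1 : (tailPositions m).card ≤ m := le_trans (Finset.card_le_univ _) (by simp)
      have h2 : Nat.factorial (tailPositions m).card ≤ Nat.factorial m := Nat.factorial_le h1
      have h3 : Nat.factorial m ≤ k * Nat.factorial m := Nat.le_mul_of_pos_left _ (by omega)
      exact Nat.div_pos (le_trans h2 h3) (Nat.factorial_pos _)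
    set D := Wsum sv ⟨1, by omega⟩ with hD
    have hKpos : (0 : ℝ) < ((PermsSet m).card : ℝ) - D :=
      sub_pos.mpr (Wsum_lt hm sv (by norm_num))
    apply wext
    funext a b
    apply propext
    have hsc : ∀ x : A, totalScore sv (shuffle (tailPositions m) k σ) x
        = (c : ℝ) * ((((PermsSet m).card : ℝ) - D) * (topCount σ x) + D * σ.length) := by
      intro x
      rw [score_shuffle sv σ k x]
      congr 1
      exact sum_Wsum hm sv σ x
    show totalScore sv _ b ≤ totalScore sv _ a ↔
      totalScore (pluralityVec m hm) σ b ≤ totalScore (pluralityVec m hm) σ a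
    rw [hsc a, hsc b, plu_score hm σ a, plu_score hm σ b]
    rw [mul_le_mul_iff_right₀ (Nat.cast_pos.mpr hcpos), add_le_add_iff_right,
      mul_le_mul_iff_right₀ hKpos]
  exact ⟨key sv, fun sv' => (key sv).trans (key sv').symm⟩


end
end
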